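/- In the FCG direction update d_k = −F(x_k) + β_{k-1} d_{k-1} − θ_{k-1} y_{k-1} with β_{k-1} = F(x_k)^T y_{k-1} / ||F(x_{k-1})||² and θ_{k-1} = F(x_k)^T d_{k-1} / ||F(x_{k-1})||², where y_{k-1} = F(x_k) − F(x_{k-1}), one always has d_k^T F(x_k) = −||F(x_k)||². -/
import Mathlib

open scoped RealInnerProductSpace

/-- The FCG direction `d_k = -F(x_k) + β_{k-1} d_{k-1} - θ_{k-1} y_{k-1}` always satisfies
`d_kᵀ F(x_k) = -‖F(x_k)‖²`. -/
theorem stmt12 (n : ℕ) (Fk Fkm dkm : EuclideanSpace ℝ (Fin n)) (hFkm : Fkm ≠ 0)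
    (yk : EuclideanSpace ℝ (Fin n)) (hyk : yk = Fk - Fkm)
    (β θ : ℝ) (hβ : β = ⟪Fk, yk⟫ / ‖Fkm‖ ^ 2) (hθ : θ = ⟪Fk, dkm⟫ / ‖Fkm‖ ^ 2)
    (dk : EuclideanSpace ℝ (Fin n)) (hdk : dk = -Fk + β • dkm - θ • yk) :
    ⟪dk, Fk⟫ = -‖Fk‖ ^ 2 := by
  subst hdk hβ hθ
  simp only [inner_sub_left, inner_add_left, inner_neg_left, inner_smul_left,
    real_inner_self_eq_norm_sq, RCLike.ofReal_real_eq_id, id, conj_trivial]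
  rw [real_inner_comm dkm Fk, real_inner_comm yk Fk]
  ring
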